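/- In a Grothendieck topos, let X be an object and let (X_i)_{i ∈ I} and (Y_j)_{j ∈ J} be two families of subobjects of X whose underlying objects are connected and such that, for each of the two families, the canonical morphism from the coproduct of the underlying objects to X (induced by the subobject inclusions) is an isomorphism. Then there exists a bijection e : I ≃ J such that X_i = Y_{e i} in the subobject lattice of X for every i ∈ I. -/

import Mathlib

/-!
Formalisation of a statement from "On the profinite fundamental group of a
connected Grothendieck topos" (Berger–Iwaniack).  A Grothendieck topos is
modelled as `Sheaf J (Type u)` for a small site `(C, J)`.
-/

open CategoryTheory CategoryTheory.Limits

universe u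

instance sheafTypeHasColimits {C : Type u} [SmallCategory C] {J : GrothendieckTopology C} :
    HasColimits (Sheaf J (Type u)) := by
  have : HasSheafify J (Type u) := inferInstance
  exact Sheaf.instHasColimitsOfSize

/-- A subobject `s` of `X` is complemented if it has a complement in the
subobject lattice of `X`. -/
def IsComplementedSub {C : Type u} [SmallCategory C] {J : GrothendieckTopology C}
    {X : Sheaf J (Type u)} (s : Subobject X) : Prop :=
  ∃ t : Subobject X, s ⊓ t = ⊥ ∧ s ⊔ t = ⊤

/-- An object is decidable if its diagonal, regarded as a subobject of `X ⨯ X`,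
is complemented. -/
def IsDecidableObj {C : Type u} [SmallCategory C] {J : GrothendieckTopology C}
    (X : Sheaf J (Type u)) : Prop :=
  IsComplementedSub (Subobject.mk (diag X))

/-- An object is connected if it is not initial and its only complemented
subobjects are `⊥` and `⊤`. -/
def IsConnectedObj {C : Type u} [SmallCategory C] {J : GrothendieckTopology C}
    (X : Sheaf J (Type u)) : Prop :=
  (¬ Nonempty (IsInitial X)) ∧
    ∀ s : Subobject X, IsComplementedSub s → s = ⊥ ∨ s = ⊤

/-- An object is locally connected if it is (isomorphic to) a coproduct of
connected objects. -/
def IsLocallyConnectedObj {C : Type u} [SmallCategory C] {J : GrothendieckTopology C}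
    (X : Sheaf J (Type u)) : Prop :=
  ∃ (I : Type u) (Z : I → Sheaf J (Type u)),
    (∀ i, IsConnectedObj (Z i)) ∧ Nonempty (X ≅ ∐ Z)

/-- An object is locally constant if it is trivialised, with constant fibres,
by some cover of the terminal object. -/
def IsLocallyConstantObj {C : Type u} [SmallCategory C] {J : GrothendieckTopology C}
    (X : Sheaf J (Type u)) : Prop :=
  ∃ (I : Type u) (U : I → Sheaf J (Type u)),
    Epi (terminal.from (∐ U)) ∧
    ∀ i, ∃ (S : Type u)
      (e : X ⨯ U i ≅ (constantSheaf J (Type u)).obj S ⨯ U i),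
      e.hom ≫ Limits.prod.snd = Limits.prod.snd

/-- An object is locally finite if it is trivialised, with finite constant
fibres, by some cover of the terminal object. -/
def IsLocallyFiniteObj {C : Type u} [SmallCategory C] {J : GrothendieckTopology C}
    (X : Sheaf J (Type u)) : Prop :=
  ∃ (I : Type u) (U : I → Sheaf J (Type u)),
    Epi (terminal.from (∐ U)) ∧
    ∀ i, ∃ (n : ℕ)
      (e : X ⨯ U i ≅ (constantSheaf J (Type u)).obj (ULift.{u} (Fin n)) ⨯ U i),
      e.hom ≫ Limits.prod.snd = Limits.prod.snd

/-- An object is finite if it is locally finite and a finite coproduct of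
connected objects. -/
def IsFiniteObj {C : Type u} [SmallCategory C] {J : GrothendieckTopology C}
    (X : Sheaf J (Type u)) : Prop :=
  IsLocallyFiniteObj X ∧
    ∃ (n : ℕ) (Z : Fin n → Sheaf J (Type u)),
      (∀ k, IsConnectedObj (Z k)) ∧ Nonempty (X ≅ ∐ Z)

/-- An object is a sum of finite objects if it is isomorphic to a coproduct of
finite objects. -/
def IsSumOfFiniteObj {C : Type u} [SmallCategory C] {J : GrothendieckTopology C}
    (X : Sheaf J (Type u)) : Prop :=
  ∃ (I : Type u) (Z : I → Sheaf J (Type u)),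
    (∀ i, IsFiniteObj (Z i)) ∧ Nonempty (X ≅ ∐ Z)

/-- A Galois object: a connected, globally supported object `A` such that the
canonical morphism `∐_{g ∈ Aut A} A ⟶ A ⨯ A` is an isomorphism. -/
def IsGaloisObj {C : Type u} [SmallCategory C] {J : GrothendieckTopology C}
    (A : Sheaf J (Type u)) : Prop :=
  IsConnectedObj A ∧ Epi (terminal.from A) ∧
    IsIso (Limits.Sigma.desc (f := fun _ : Aut A => A)
      (fun g => Limits.prod.lift (𝟙 A) g.hom))

namespace ConnDecomp

open Opposite

variable {C : Type u} [SmallCategory C] {J : GrothendieckTopology C}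


/-- Over an object covered by the empty sieve, every sheaf has a unique section. -/
noncomputable def uniqueSectionsOfBotMem (W : Sheaf J (Type u)) {U : C}
    (h : (⊥ : Sieve U) ∈ J U) : Unique (W.val.obj (op U)) := by
  have hW := (isSheaf_iff_isSheaf_of_type J W.val).1 W.2
  have hfam : Presieve.FamilyOfElements W.val (⊥ : Sieve U).arrows := by
    intro V g hg; exact hg.elim
  have H := hW _ h (x := hfam) (by intro V₁ V₂ Z g₁ g₂ f₁ f₂ h₁ h₂ _; exact h₁.elim)
  refine ⟨⟨H.exists.choose⟩, fun a => H.unique ?_ H.exists.choose_spec⟩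
  intro V g hg; exact hg.elim

theorem subsingleton_sections_of_botMem (W : Sheaf J (Type u)) {U : C}
    (h : (⊥ : Sieve U) ∈ J U) : Subsingleton (W.val.obj (op U)) :=
  @Unique.instSubsingleton _ (uniqueSectionsOfBotMem W h)

/-- A non-initial sheaf has a section over a non-degenerate object. -/
theorem exists_section_of_not_initial (Z : Sheaf J (Type u))
    (h : ¬ Nonempty (IsInitial Z)) :
    ∃ (U : C) (_ : Z.val.obj (op U)), ¬ (⊥ : Sieve U) ∈ J U := by
  by_contra hc
  push_neg at hc
  refine h ⟨IsInitial.ofUniqueHom (fun W => ObjectProperty.homMk ⟨fun o => TypeCat.ofHom fun z =>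
      (uniqueSectionsOfBotMem W (hc o.unop z)).default, ?_⟩) (fun W m => ?_)⟩
  · intro o o' g
    ext z
    exact @Subsingleton.elim _
      (subsingleton_sections_of_botMem W (hc o'.unop (Z.val.map g z))) _ _
  · apply Sheaf.hom_ext
    apply NatTrans.ext
    funext o; ext z
    exact @Subsingleton.elim _
      (subsingleton_sections_of_botMem W (hc o.unop z)) _ _



/-- In a covering sieve of a non-degenerate object there is a morphism
from a non-degenerate object. -/
theorem exists_nondegenerate_of_mem {U : C} {S : Sieve U} (hS : S ∈ J U)
    (hU : ¬ (⊥ : Sieve U) ∈ J U) :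
    ∃ (V : C) (g : V ⟶ U), S g ∧ ¬ (⊥ : Sieve V) ∈ J V := by
  by_contra h
  push_neg at h
  refine hU (J.transitive hS ⊥ (fun V g hg => ?_))
  have : (⊥ : Sieve U).pullback g = ⊥ := by
    ext W f
    exact Iff.rfl
  rw [this]
  exact h V g hg

/-- Any section of an initial sheaf lives over a degenerate object. -/
theorem bot_mem_of_isInitial_section (Z : Sheaf J (Type u)) (hZ : IsInitial Z)
    {U : C} (z : Z.val.obj (op U)) : (⊥ : Sieve U) ∈ J U := by
  let P : Cᵒᵖ ⥤ Type u := (Functor.const _).obj PEmpty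
  have hP0 : IsInitial P := by
    refine IsInitial.ofUniqueHom (fun W => ⟨fun o => TypeCat.ofHom fun x => (x : PEmpty).elim, ?_⟩) (fun W m => ?_)
    · intro o o' g; ext x; exact x.elim
    · apply NatTrans.ext; funext o; ext x; exact x.elim
  have hP : IsInitial ((presheafToSheaf J (Type u)).obj P) :=
    IsInitial.isInitialObj (presheafToSheaf J (Type u)) _ hP0
  let e : Z ≅ (presheafToSheaf J (Type u)).obj P := hZ.uniqueUpToIso hP
  let z' := e.hom.hom.app (op U) z
  have hmem := Presheaf.imageSieve_mem J (toSheafify J P) z'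
  have he : Presheaf.imageSieve (toSheafify J P) z' = ⊥ := by
    ext V g
    constructor
    · rintro ⟨t, -⟩
      exact (t : PEmpty).elim
    · intro h
      exact h.elim
  rwa [he] at hmem

/-- The morphism from the free sheaf on `V` determined by a section over `V`. -/
noncomputable def secHom {V : C} {Z : Sheaf J (Type u)} (z : Z.val.obj (op V)) :
    (presheafToSheaf J (Type u)).obj (yoneda.obj V) ⟶ Z :=
  ((sheafificationAdjunction J (Type u)).homEquiv _ _).symm (yonedaEquiv.symm z)

theorem secHom_comp {V : C} {Z W : Sheaf J (Type u)} (z : Z.val.obj (op V)) (h : Z ⟶ W) :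
    secHom z ≫ h = secHom (h.hom.app _ z) := by
  dsimp only [secHom]
  rw [← Adjunction.homEquiv_naturality_right_symm]
  congr 1
  apply yonedaEquiv.injective
  simp [yonedaEquiv]

theorem nonempty_section_of_hom {V : C} {W : Sheaf J (Type u)}
    (f : (presheafToSheaf J (Type u)).obj (yoneda.obj V) ⟶ W) :
    Nonempty (W.val.obj (op V)) :=
  ⟨yonedaEquiv ((sheafificationAdjunction J (Type u)).homEquiv _ _ f)⟩



theorem presheaf_sigma_jointly_surjective {I : Type u} (P : I → (Cᵒᵖ ⥤ Type u)) (o : Cᵒᵖ)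
    (t : (∐ P).obj o) : ∃ (i : I) (t₀ : (P i).obj o), (Limits.Sigma.ι P i).app o t₀ = t := by
  let F := Discrete.functor P
  obtain ⟨⟨i⟩, y, hy⟩ := Types.jointly_surjective'
    ((colimitObjIsoColimitCompEvaluation F o).hom t)
  refine ⟨i, y, ?_⟩
  have h2 := congrArg (colimitObjIsoColimitCompEvaluation F o).inv hy
  have h3 := ConcreteCategory.congr_hom (colimitObjIsoColimitCompEvaluation_ι_inv F ⟨i⟩ o) y
  simp only [types_comp_apply] at h3
  rw [h3] at h2
  simpa using h2

/-- The canonical morphism from the presheaf coproduct to the sheaf coproduct. -/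
noncomputable def presheafCoprodDesc {I : Type u} (Z : I → Sheaf J (Type u)) :
    (∐ fun i => (Z i).val) ⟶ (∐ Z).val :=
  Limits.Sigma.desc fun i => (Limits.Sigma.ι Z i).hom

theorem isLocallySurjective_presheafCoprodDesc {I : Type u} (Z : I → Sheaf J (Type u)) :
    Presheaf.IsLocallySurjective J (presheafCoprodDesc Z) := by
  let adj := sheafificationAdjunction J (Type u)
  let φ := presheafCoprodDesc Z
  let ψ : (presheafToSheaf J (Type u)).obj (∐ fun i => (Z i).val) ⟶ ∐ Z :=
    (adj.homEquiv _ _).symm φ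
  have hepi : Epi ψ := by
    constructor
    intro W a b hab
    have h1 : φ ≫ a.hom = φ ≫ b.hom := by
      have h := congrArg (adj.homEquiv _ _) hab
      rw [Adjunction.homEquiv_naturality_right, Adjunction.homEquiv_naturality_right,
        Equiv.apply_symm_apply] at h
      exact h
    apply Limits.Sigma.hom_ext
    intro i
    apply Sheaf.hom_ext
    have h2 := congrArg (fun q => Limits.Sigma.ι (fun i => (Z i).val) i ≫ q) h1
    simpa [φ, presheafCoprodDesc] using h2
  have hfac : φ = toSheafify J (∐ fun i => (Z i).val) ≫ (sheafToPresheaf J (Type u)).map ψ := by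
    rw [← sheafificationAdjunction_unit_app, ← Adjunction.homEquiv_unit, Equiv.apply_symm_apply]
  have h2 : Sheaf.IsLocallySurjective ψ := by
    rw [Sheaf.isLocallySurjective_iff_epi]
    exact hepi
  haveI h1 : Presheaf.IsLocallySurjective J (toSheafify J (∐ fun i => (Z i).val)) :=
    inferInstance
  haveI h2' : Presheaf.IsLocallySurjective J ((sheafToPresheaf J (Type u)).map ψ) := h2
  show Presheaf.IsLocallySurjective J φ
  rw [hfac]
  exact Presheaf.isLocallySurjective_comp J _ _

/-- Every section of a sheaf coproduct locally factors through a component. -/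
theorem exists_local_factorization {I : Type u} (Z : I → Sheaf J (Type u))
    {U : C} (s : (∐ Z).val.obj (op U)) :
    Sieve.mk (fun V g =>
      ∃ (i : I) (t : (Z i).val.obj (op V)),
        (Limits.Sigma.ι Z i).hom.app (op V) t = (∐ Z).val.map g.op s) (by
      rintro V W g ⟨i, t, ht⟩ h
      refine ⟨i, (Z i).val.map h.op t, ?_⟩
      have hn := FunctorToTypes.naturality (Limits.Sigma.ι Z i).hom h.op t
      rw [hn, ht, ← FunctorToTypes.map_comp_apply, ← op_comp]) ∈ J U := by
  haveI := isLocallySurjective_presheafCoprodDesc Z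
  have hmem := Presheaf.imageSieve_mem J (presheafCoprodDesc Z) s
  refine J.superset_covering ?_ hmem
  rintro V g ⟨t, ht⟩
  obtain ⟨i, t₀, rfl⟩ := presheaf_sigma_jointly_surjective (fun i => (Z i).val) (op V) t
  refine ⟨i, t₀, ?_⟩
  have h5 : (Limits.Sigma.ι Z i).hom.app (op V) t₀ =
      (presheafCoprodDesc Z).app (op V) ((Limits.Sigma.ι (fun i => (Z i).val) i).app (op V) t₀) :=
    (ConcreteCategory.congr_hom (NatTrans.congr_app
      (Limits.Sigma.ι_desc (f := fun i => (Z i).val) (fun i => (Limits.Sigma.ι Z i).hom) i) (op V)) t₀).symm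
  rw [h5]
  exact ht



theorem eq_bot_of_isInitial {W : Sheaf J (Type u)} {S : Subobject W}
    (h : IsInitial (S : Sheaf J (Type u))) : S = ⊥ := by
  refine le_antisymm ?_ bot_le
  rw [Subobject.bot_eq_initial_to]
  exact Subobject.le_mk_of_comm (h.to _) (h.hom_ext _ _)

noncomputable def isInitialOfEqBot {W : Sheaf J (Type u)} {S : Subobject W} (h : S = ⊥) :
    IsInitial (S : Sheaf J (Type u)) := by
  rw [h]
  exact IsInitial.ofIso initialIsInitial Subobject.botCoeIsoInitial.symm

theorem mk_inf_mk_eq_bot {W A B : Sheaf J (Type u)} (f : A ⟶ W) (g : B ⟶ W)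
    [Mono f] [Mono g] (h : IsInitial (pullback f g)) :
    Subobject.mk f ⊓ Subobject.mk g = ⊥ := by
  refine eq_bot_of_isInitial (IsInitial.ofStrict (pullback.lift
    (Subobject.ofLE _ _ inf_le_left ≫ (Subobject.underlyingIso f).hom)
    (Subobject.ofLE _ _ inf_le_right ≫ (Subobject.underlyingIso g).hom) ?_) h)
  rw [Category.assoc, Category.assoc, Subobject.underlyingIso_hom_comp_eq_mk,
    Subobject.underlyingIso_hom_comp_eq_mk, Subobject.ofLE_arrow, Subobject.ofLE_arrow]

theorem mk_sup_mk_eq_top {W A B : Sheaf J (Type u)} {f : A ⟶ W} {g : B ⟶ W}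
    [Mono f] [Mono g] (hc : IsColimit (BinaryCofan.mk f g)) :
    Subobject.mk f ⊔ Subobject.mk g = ⊤ := by
  set S := Subobject.mk f ⊔ Subobject.mk g with hS
  let aS : A ⟶ (S : Sheaf J (Type u)) :=
    (Subobject.underlyingIso f).inv ≫ Subobject.ofLE _ _ (le_sup_left (b := Subobject.mk g))
  let aT : B ⟶ (S : Sheaf J (Type u)) :=
    (Subobject.underlyingIso g).inv ≫ Subobject.ofLE _ _ (le_sup_right (a := Subobject.mk f))
  have haS : aS ≫ S.arrow = f := by
    rw [Category.assoc, Subobject.ofLE_arrow, Subobject.underlyingIso_arrow]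
  have haT : aT ≫ S.arrow = g := by
    rw [Category.assoc, Subobject.ofLE_arrow, Subobject.underlyingIso_arrow]
  let d : W ⟶ (S : Sheaf J (Type u)) := hc.desc (BinaryCofan.mk aS aT)
  have hd : d ≫ S.arrow = 𝟙 W := by
    apply BinaryCofan.IsColimit.hom_ext hc
    · exact (Category.assoc _ _ _).symm.trans ((hc.fac (BinaryCofan.mk aS aT) ⟨WalkingPair.left⟩ =≫ S.arrow).trans (haS.trans (Category.comp_id _).symm))
    · exact (Category.assoc _ _ _).symm.trans ((hc.fac (BinaryCofan.mk aS aT) ⟨WalkingPair.right⟩ =≫ S.arrow).trans (haT.trans (Category.comp_id _).symm))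
  haveI : IsSplitEpi S.arrow := IsSplitEpi.mk' ⟨d, hd⟩
  haveI : IsIso S.arrow := isIso_of_mono_of_isSplitEpi _
  exact Subobject.eq_top_of_isIso_arrow S

section SplitOff

variable {XX : Sheaf J (Type u)} {I : Type u} (Zs : I → Subobject XX)

/-- The inclusion of "all components except `i₀`". -/
noncomputable def restMap (i₀ : I) :
    (∐ fun k : {k : I // k ≠ i₀} => ((Zs k.1 : Sheaf J (Type u)))) ⟶ XX :=
  Limits.Sigma.desc fun k => (Zs k.1).arrow

/-- The binary cofan splitting off the component `i₀`. -/
noncomputable def splitCofan (i₀ : I) :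
    BinaryCofan ((Zs i₀ : Sheaf J (Type u)))
      (∐ fun k : {k : I // k ≠ i₀} => ((Zs k.1 : Sheaf J (Type u)))) :=
  BinaryCofan.mk (Zs i₀).arrow (restMap Zs i₀)

noncomputable def splitCofanIsColimit
    (hd : IsIso (Limits.Sigma.desc fun i => (Zs i).arrow)) (i₀ : I) :
    IsColimit (splitCofan Zs i₀) := by
  classical
  set d := Limits.Sigma.desc fun i => (Zs i).arrow with hdd
  haveI hdI : IsIso d := hd
  refine BinaryCofan.IsColimit.mk _
    (fun {T} f g => inv (I := hdI) d ≫ Limits.Sigma.desc (fun k =>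
      if h : k = i₀ then eqToHom (by rw [h]) ≫ f
      else Limits.Sigma.ι (fun k : {k : I // k ≠ i₀} => ((Zs k.1 : Sheaf J (Type u)))) ⟨k, h⟩ ≫ g))
    (fun {T} f g => ?_) (fun {T} f g => ?_) (fun {T} f g q h1 h2 => ?_)
  · have h0 : (Zs i₀).arrow = Limits.Sigma.ι (fun i => ((Zs i : Sheaf J (Type u)))) i₀ ≫ d := by
      rw [hdd, Limits.Sigma.ι_desc]
    simp only [splitCofan, BinaryCofan.mk_inl]
    erw [h0, Category.assoc, IsIso.hom_inv_id_assoc, Limits.Sigma.ι_desc,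
      dif_pos rfl, eqToHom_refl, Category.id_comp]
  · simp only [splitCofan, BinaryCofan.mk_inr, restMap]
    apply Limits.Sigma.hom_ext
    intro k
    have h0 : (Zs k.1).arrow = Limits.Sigma.ι (fun i => ((Zs i : Sheaf J (Type u)))) k.1 ≫ d := by
      rw [hdd, Limits.Sigma.ι_desc]
    erw [← Category.assoc, Limits.Sigma.ι_desc, h0, Category.assoc, IsIso.hom_inv_id_assoc, Limits.Sigma.ι_desc,
      dif_neg k.2]
  · erw [← cancel_epi d, ← Category.assoc, IsIso.hom_inv_id, Category.id_comp]
    apply Limits.Sigma.hom_ext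
    intro k
    rw [Limits.Sigma.ι_desc]
    by_cases hk : k = i₀
    · subst hk
      erw [dif_pos rfl, eqToHom_refl, Category.id_comp, hdd, ← Category.assoc, Limits.Sigma.ι_desc]
      exact h1
    · erw [dif_neg hk, hdd, ← Category.assoc, Limits.Sigma.ι_desc]
      have h3 : (Zs k).arrow =
          Limits.Sigma.ι (fun k : {k : I // k ≠ i₀} => ((Zs k.1 : Sheaf J (Type u)))) ⟨k, hk⟩ ≫
            restMap Zs i₀ := by
        rw [restMap, Limits.Sigma.ι_desc]
      have h4 : restMap Zs i₀ ≫ q = g := by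
        exact h2
      erw [h3, Category.assoc, h4]

theorem mono_restMap (hd : IsIso (Limits.Sigma.desc fun i => (Zs i).arrow)) (i₀ : I) :
    Mono (restMap Zs i₀) :=
  FinitaryExtensive.mono_inr_of_isColimit (splitCofanIsColimit Zs hd i₀)

noncomputable def initialPullbackSplit (hd : IsIso (Limits.Sigma.desc fun i => (Zs i).arrow)) (i₀ : I) :
    IsInitial (pullback (Zs i₀).arrow (restMap Zs i₀)) := by
  have hpb := FinitaryExtensive.isPullback_initial_to_binaryCofan (splitCofanIsColimit Zs hd i₀)
  exact IsInitial.ofIso initialIsInitial hpb.isoPullback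

theorem component_inf_eq_bot (hd : IsIso (Limits.Sigma.desc fun i => (Zs i).arrow))
    {i i' : I} (h : i' ≠ i) : Zs i ⊓ Zs i' = ⊥ := by
  haveI := mono_restMap Zs hd i
  have h1 : Subobject.mk (Zs i).arrow ⊓ Subobject.mk (restMap Zs i) = ⊥ :=
    mk_inf_mk_eq_bot _ _ (initialPullbackSplit Zs hd i)
  have h2 : Zs i' ≤ Subobject.mk (restMap Zs i) := by
    conv_lhs => rw [← Subobject.mk_arrow (Zs i')]
    refine Subobject.mk_le_mk_of_comm
      (Limits.Sigma.ι (fun k : {k : I // k ≠ i} => ((Zs k.1 : Sheaf J (Type u)))) ⟨i', h⟩) ?_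
    rw [restMap, Limits.Sigma.ι_desc]
  have h3 : Zs i ⊓ Zs i' ≤ ⊥ := by
    rw [← h1]
    refine inf_le_inf ?_ h2
    rw [Subobject.mk_arrow]
  exact le_bot_iff.1 h3

end SplitOff

noncomputable def pullbackCofanIsColimit {W Y A B : Sheaf J (Type u)} (m : Y ⟶ W)
    (u : A ⟶ W) (v : B ⟶ W) (hc : IsColimit (BinaryCofan.mk u v)) :
    IsColimit (BinaryCofan.mk (pullback.snd u m) (pullback.snd v m)) := by
  have hvk := FinitaryExtensive.vanKampen _ hc
  rw [BinaryCofan.isVanKampen_iff] at hvk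
  refine ((hvk (BinaryCofan.mk (pullback.snd u m) (pullback.snd v m))
      (pullback.fst u m) (pullback.fst v m) m ?_ ?_).2 ⟨?_, ?_⟩).some
  · exact pullback.condition
  · exact pullback.condition
  · exact (IsPullback.of_hasPullback u m).flip
  · exact (IsPullback.of_hasPullback v m).flip

theorem le_component_of_eq_top {XX : Sheaf J (Type u)} {I : Type u} (Zs : I → Subobject XX)
    (S : Subobject XX) (i : I)
    (h : Subobject.mk (pullback.snd (Zs i).arrow S.arrow) = ⊤) : S ≤ Zs i := by
  haveI : IsIso (pullback.snd (Zs i).arrow S.arrow) := by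
    rw [Subobject.isIso_iff_mk_eq_top]
    exact h
  conv_lhs => rw [← Subobject.mk_arrow S]
  conv_rhs => rw [← Subobject.mk_arrow (Zs i)]
  refine Subobject.mk_le_mk_of_comm
    (inv (pullback.snd (Zs i).arrow S.arrow) ≫ pullback.fst (Zs i).arrow S.arrow) ?_
  rw [Category.assoc, pullback.condition, IsIso.inv_hom_id_assoc]

theorem isComplemented_componentPullback {XX : Sheaf J (Type u)} {I : Type u}
    (Zs : I → Subobject XX) (S : Subobject XX)
    (hd : IsIso (Limits.Sigma.desc fun i => (Zs i).arrow)) (i : I) :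
    IsComplementedSub (Subobject.mk (pullback.snd (Zs i).arrow S.arrow)) := by
  haveI := mono_restMap Zs hd i
  refine ⟨Subobject.mk (pullback.snd (restMap Zs i) S.arrow), ?_, ?_⟩
  · refine mk_inf_mk_eq_bot _ _ (IsInitial.ofStrict (pullback.lift
      (pullback.fst (pullback.snd (Zs i).arrow S.arrow) (pullback.snd (restMap Zs i) S.arrow) ≫
        pullback.fst (Zs i).arrow S.arrow)
      (pullback.snd (pullback.snd (Zs i).arrow S.arrow) (pullback.snd (restMap Zs i) S.arrow) ≫
        pullback.fst (restMap Zs i) S.arrow) ?_) (initialPullbackSplit Zs hd i))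
    simp only [Category.assoc]
    rw [pullback.condition (f := (Zs i).arrow) (g := S.arrow),
      pullback.condition (f := restMap Zs i) (g := S.arrow),
      ← Category.assoc, ← Category.assoc, pullback.condition]
  · exact mk_sup_mk_eq_top (pullbackCofanIsColimit S.arrow _ _ (splitCofanIsColimit Zs hd i))

theorem nonbot_of_connected {XX : Sheaf J (Type u)} {S : Subobject XX}
    (hS : IsConnectedObj ((S : Sheaf J (Type u)))) : S ≠ ⊥ := fun h =>
  hS.1 ⟨isInitialOfEqBot h⟩

theorem exists_le_component {XX : Sheaf J (Type u)} {I : Type u} (Zs : I → Subobject XX)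
    (hd : IsIso (Limits.Sigma.desc fun i => (Zs i).arrow))
    (S : Subobject XX) (hS : IsConnectedObj ((S : Sheaf J (Type u)))) :
    ∃ i, S ≤ Zs i := by
  by_contra hno
  push_neg at hno
  have hbot : ∀ i, Subobject.mk (pullback.snd (Zs i).arrow S.arrow) = ⊥ := by
    intro i
    rcases hS.2 _ (isComplemented_componentPullback Zs S hd i) with h | h
    · exact h
    · exact absurd (le_component_of_eq_top Zs S i h) (fun hle => hno i hle)
  have hinit : ∀ i, IsInitial (pullback (Zs i).arrow S.arrow) := fun i =>
    IsInitial.ofIso (isInitialOfEqBot (hbot i)) (Subobject.underlyingIso _)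
  obtain ⟨U, y, hU⟩ := exists_section_of_not_initial _ hS.1
  let x : XX.val.obj (op U) := S.arrow.hom.app (op U) y
  set dd := (Limits.Sigma.desc fun i => (Zs i).arrow :
    (∐ fun i => ((Zs i : Sheaf J (Type u)))) ⟶ XX) with hdd
  haveI : IsIso dd := hd
  let s : (∐ fun i => ((Zs i : Sheaf J (Type u)))).val.obj (op U) := (inv dd).hom.app (op U) x
  have hsieve := exists_local_factorization (fun i => ((Zs i : Sheaf J (Type u)))) s
  obtain ⟨V, g, hg, hV⟩ := exists_nondegenerate_of_mem hsieve hU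
  obtain ⟨i, t, ht⟩ := hg
  have key : (Zs i).arrow.hom.app (op V) t = XX.val.map g.op x := by
    have h1 : (Zs i).arrow = Limits.Sigma.ι (fun i => ((Zs i : Sheaf J (Type u)))) i ≫ dd := by
      rw [hdd, Limits.Sigma.ι_desc]
    have h2 : (Zs i).arrow.hom.app (op V) t
        = dd.hom.app (op V) ((Limits.Sigma.ι (fun i => ((Zs i : Sheaf J (Type u)))) i).hom.app (op V) t) := by
      rw [h1]
      rfl
    rw [h2, ht]
    have h3 := FunctorToTypes.naturality dd.hom g.op s
    rw [h3]
    have h4 : inv dd ≫ dd = 𝟙 _ := IsIso.inv_hom_id dd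
    have h5 := congr_fun (congrArg (fun q => q.hom.app (op U)) h4) x
    have h6 : dd.hom.app (op U) s = x := h5
    rw [h6]
  let w : (presheafToSheaf J (Type u)).obj (yoneda.obj V) ⟶ pullback (Zs i).arrow S.arrow :=
    pullback.lift (secHom t) (secHom (((S : Sheaf J (Type u))).val.map g.op y)) (by
      rw [secHom_comp, secHom_comp]
      congr 1
      rw [key]
      exact (FunctorToTypes.naturality S.arrow.hom g.op y).symm)
  obtain ⟨p⟩ := nonempty_section_of_hom w
  exact hV (bot_mem_of_isInitial_section _ (hinit i) p)

end ConnDecomp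

/-- uniqueness of sum decompositions into connected subobjects. -/
theorem connected_decomposition_unique
    {C : Type u} [SmallCategory C] {J : GrothendieckTopology C}
    (X : Sheaf J (Type u)) (I I' : Type u)
    (Xs : I → Subobject X) (Ys : I' → Subobject X)
    (hXc : ∀ i, IsConnectedObj ((Xs i : Sheaf J (Type u))))
    (hYc : ∀ j, IsConnectedObj ((Ys j : Sheaf J (Type u))))
    (hX : IsIso (Limits.Sigma.desc fun i => (Xs i).arrow))
    (hY : IsIso (Limits.Sigma.desc fun j => (Ys j).arrow)) :
    ∃ e : I ≃ I', ∀ i, Xs i = Ys (e i) := by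
  classical
  choose g hg using fun i => ConnDecomp.exists_le_component Ys hY (Xs i) (hXc i)
  choose f hf using fun j => ConnDecomp.exists_le_component Xs hX (Ys j) (hYc j)
  have keyX : ∀ (i i' : I), Xs i ≤ Xs i' → i = i' := by
    intro i i' hle
    by_contra hne
    have h0 : Xs i ≤ Xs i' ⊓ Xs i := le_inf hle le_rfl
    rw [ConnDecomp.component_inf_eq_bot Xs hX hne] at h0
    exact ConnDecomp.nonbot_of_connected (hXc i) (le_bot_iff.1 h0)
  have keyY : ∀ (j j' : I'), Ys j ≤ Ys j' → j = j' := by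
    intro j j' hle
    by_contra hne
    have h0 : Ys j ≤ Ys j' ⊓ Ys j := le_inf hle le_rfl
    rw [ConnDecomp.component_inf_eq_bot Ys hY hne] at h0
    exact ConnDecomp.nonbot_of_connected (hYc j) (le_bot_iff.1 h0)
  have hfg : ∀ i, f (g i) = i := fun i =>
    (keyX _ _ ((hg i).trans (hf (g i)))).symm
  have hgf : ∀ j, g (f j) = j := fun j =>
    (keyY _ _ ((hf j).trans (hg (f j)))).symm
  refine ⟨⟨g, f, hfg, hgf⟩, fun i => le_antisymm (hg i) ?_⟩
  have h1 := hf (g i)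
  rwa [hfg i] at h1
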